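/- A type-2 path with endpoints of type 0 in a barycentric subdivision of an embedded graph is an induced subgraph. -/

import Mathlib

/-- A combinatorial map (embedded multigraph): a finite nonempty set of darts
(oriented edges) with a fixed-point-free involution pairing darts into edges and
a rotation permutation whose orbits are the vertices; connectivity is required. -/
structure CombMap where
  D : Type
  [fintypeD : Fintype D]
  [nonemptyD : Nonempty D]
  inv : Equiv.Perm D
  inv_invol : ∀ d, inv (inv d) = d
  inv_ne : ∀ d, inv d ≠ d
  rot : Equiv.Perm D
  conn : ∀ d d' : D,
    ∃ g ∈ Subgroup.closure ({rot, inv} : Set (Equiv.Perm D)), g d = d'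

attribute [instance] CombMap.fintypeD CombMap.nonemptyD

namespace CombMap

variable (G : CombMap)

def vertexSetoid : Setoid G.D :=
  ⟨G.rot.SameCycle,
   ⟨fun _ => ⟨0, by simp⟩, Equiv.Perm.SameCycle.symm, Equiv.Perm.SameCycle.trans⟩⟩

def Vertex : Type := Quotient G.vertexSetoid

def vertexOf (d : G.D) : G.Vertex := Quotient.mk G.vertexSetoid d

/-- The facial permutation; its orbits are the faces. -/
def facePerm : Equiv.Perm G.D := G.rot * G.inv

def faceSetoid : Setoid G.D :=
  ⟨G.facePerm.SameCycle,
   ⟨fun _ => ⟨0, by simp⟩, Equiv.Perm.SameCycle.symm, Equiv.Perm.SameCycle.trans⟩⟩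

def Face : Type := Quotient G.faceSetoid

def faceOf (d : G.D) : G.Face := Quotient.mk G.faceSetoid d

def edgeSetoid : Setoid G.D :=
  ⟨fun d d' => d' = d ∨ d' = G.inv d, by
    constructor
    · exact fun x => Or.inl rfl
    · rintro x y (rfl | rfl)
      · exact Or.inl rfl
      · exact Or.inr (G.inv_invol x).symm
    · rintro x y z (rfl | rfl) h2
      · exact h2
      · rcases h2 with rfl | rfl
        · exact Or.inr rfl
        · exact Or.inl (G.inv_invol x)⟩

def Edge : Type := Quotient G.edgeSetoid

def edgeOf (d : G.D) : G.Edge := Quotient.mk G.edgeSetoid d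

noncomputable def eulerChar : ℤ :=
  (Nat.card G.Vertex : ℤ) - (Nat.card G.Edge : ℤ) + (Nat.card G.Face : ℤ)

def IsPlane : Prop := G.eulerChar = 2

def HasGenus (g : ℕ) : Prop := G.eulerChar = 2 - 2 * (g : ℤ)

def Adj (u w : G.Vertex) : Prop :=
  ∃ d, G.vertexOf d = u ∧ G.vertexOf (G.inv d) = w

noncomputable def degree (v : G.Vertex) : ℕ := Nat.card {d : G.D // G.vertexOf d = v}

def edgeJoins (e : G.Edge) (u w : G.Vertex) : Prop :=
  ∃ d, G.edgeOf d = e ∧ G.vertexOf d = u ∧ G.vertexOf (G.inv d) = w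

/-- Reachability by walks avoiding the vertex set `X`. -/
def ReachAvoiding (X : Set G.Vertex) : G.Vertex → G.Vertex → Prop :=
  Relation.ReflTransGen (fun a b => a ∉ X ∧ b ∉ X ∧ G.Adj a b)

def TwoConnected : Prop :=
  3 ≤ Nat.card G.Vertex ∧
    ∀ v u w : G.Vertex, u ≠ v → w ≠ v → G.ReachAvoiding {v} u w

def ThreeConnected : Prop :=
  4 ≤ Nat.card G.Vertex ∧
    ∀ x y u w : G.Vertex, u ∉ ({x, y} : Set G.Vertex) →
      w ∉ ({x, y} : Set G.Vertex) → G.ReachAvoiding {x, y} u w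

/-- No loops and no multiple edges. -/
def Simple : Prop :=
  (∀ d, G.vertexOf d ≠ G.vertexOf (G.inv d)) ∧
  ∀ d d', G.vertexOf d = G.vertexOf d' →
    G.vertexOf (G.inv d) = G.vertexOf (G.inv d') → G.edgeOf d = G.edgeOf d'

/-- Every facial walk has length exactly three. -/
def Triangulated : Prop :=
  ∀ d, G.facePerm d ≠ d ∧ G.facePerm (G.facePerm (G.facePerm d)) = d

def boundaryV (f : G.Face) : Set G.Vertex :=
  {v | ∃ d, G.faceOf d = f ∧ G.vertexOf d = v}

def boundaryE (f : G.Face) : Set G.Edge :=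
  {e | ∃ d, G.faceOf d = f ∧ G.edgeOf d = e}

/-- A polyhedral embedding: simple, and any two distinct faces meet in
nothing, exactly one vertex, or exactly one edge (with its two endpoints). -/
def Polyhedral : Prop :=
  G.Simple ∧ ∀ f g : G.Face, f ≠ g →
    (G.boundaryV f ∩ G.boundaryV g = ∅) ∨
    (∃ v, G.boundaryV f ∩ G.boundaryV g = {v} ∧ G.boundaryE f ∩ G.boundaryE g = ∅) ∨
    (∃ e v w, v ≠ w ∧ G.edgeJoins e v w ∧ G.boundaryE f ∩ G.boundaryE g = {e} ∧
      G.boundaryV f ∩ G.boundaryV g = {v, w})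

/-- The dual embedded graph: same darts, same edge involution, rotation given
by the facial permutation, so that vertices of the dual are faces of `G`. -/
def dual : CombMap where
  D := G.D
  fintypeD := G.fintypeD
  nonemptyD := G.nonemptyD
  inv := G.inv
  inv_invol := G.inv_invol
  inv_ne := G.inv_ne
  rot := G.facePerm
  conn := by
    intro d d'
    obtain ⟨g, hg, hgd⟩ := G.conn d d'
    refine ⟨g, ?_, hgd⟩
    have hinv2 : G.inv * G.inv = 1 := by
      ext x
      simp [Equiv.Perm.mul_apply, G.inv_invol]
    have hrot : G.rot = G.facePerm * G.inv := by
      rw [facePerm, mul_assoc, hinv2, mul_one]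
    have hsub : ({G.rot, G.inv} : Set (Equiv.Perm G.D)) ⊆
        ↑(Subgroup.closure ({G.facePerm, G.inv} : Set (Equiv.Perm G.D))) := by
      rintro x (rfl | rfl)
      · rw [SetLike.mem_coe, hrot]
        exact mul_mem (Subgroup.subset_closure (Set.mem_insert _ _))
          (Subgroup.subset_closure (Set.mem_insert_of_mem _ rfl))
      · exact Subgroup.subset_closure (Set.mem_insert_of_mem _ rfl)
    exact (Subgroup.closure_le _).2 hsub hg

end CombMap

/-- An embedded graph whose darts are labelled by the types (in `{0,1,2}`) of
their vertices; the label is constant on rotation orbits. -/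
structure LabMap extends CombMap where
  lab : D → Fin 3
  lab_rot : ∀ d, lab (rot d) = lab d

namespace LabMap

variable (G : LabMap)

lemma lab_zpow (i : ℤ) : ∀ d, G.lab ((G.rot ^ i) d) = G.lab d := by
  induction i using Int.induction_on with
  | zero => intro d; simp
  | succ n ih =>
      intro d
      have h : (G.rot ^ ((n : ℤ) + 1)) d = (G.rot ^ (n : ℤ)) (G.rot d) := by
        rw [zpow_add, zpow_one, Equiv.Perm.mul_apply]
      rw [h, ih, G.lab_rot]
  | pred n ih =>
      intro d
      have h : (G.rot ^ (-(n : ℤ) - 1)) d = (G.rot ^ (-(n : ℤ))) (G.rot⁻¹ d) := by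
        rw [sub_eq_add_neg, zpow_add, zpow_neg_one, Equiv.Perm.mul_apply]
      have h2 : G.lab (G.rot⁻¹ d) = G.lab d := by
        conv_rhs => rw [← (show G.rot (G.rot⁻¹ d) = d from by simp)]
        rw [G.lab_rot]
      rw [h, ih, h2]

/-- The type of a vertex. -/
def vtype : G.toCombMap.Vertex → Fin 3 :=
  Quotient.lift G.lab (by
    intro a b hab
    obtain ⟨i, hi⟩ := hab
    rw [← hi, G.lab_zpow])

/-- The type of an edge: the type in `{0,1,2}` not occurring among the types
of its two endpoints (when these are distinct). -/
def edgeType (d : G.D) : Fin 3 := -(G.lab d + G.lab (G.inv d))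

/-- No edge joins two vertices of the same type. -/
def NoSameTypeEdges : Prop := ∀ d, G.lab (G.inv d) ≠ G.lab d

end LabMap

/-- Witness data exhibiting `B` as the barycentric subdivision of `G`:
type-0/1/2 vertices of `B` correspond to vertices/edges/faces of `G`, and the
edges of `B` correspond to the incidences (with multiplicity) of `G`:
each dart of `G` gives one edge of `B` of each of the three types. -/
structure BaryStruct (G : CombMap) (B : LabMap) where
  noSame : B.NoSameTypeEdges
  tri : B.toCombMap.Triangulated
  b0 : G.Vertex → B.toCombMap.Vertex
  b1 : G.Edge → B.toCombMap.Vertex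
  b2 : G.Face → B.toCombMap.Vertex
  bBij : Function.Bijective
    (Sum.elim b0 (Sum.elim b1 b2) : G.Vertex ⊕ (G.Edge ⊕ G.Face) → B.toCombMap.Vertex)
  t0 : ∀ v, B.vtype (b0 v) = 0
  t1 : ∀ e, B.vtype (b1 e) = 1
  t2 : ∀ f, B.vtype (b2 f) = 2
  c0 : G.D → B.toCombMap.Edge
  c1 : G.D → B.toCombMap.Edge
  c2 : G.D → B.toCombMap.Edge
  j2 : ∀ d, B.toCombMap.edgeJoins (c2 d) (b0 (G.vertexOf d)) (b1 (G.edgeOf d))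
  j1 : ∀ d, B.toCombMap.edgeJoins (c1 d) (b0 (G.vertexOf d)) (b2 (G.faceOf d))
  j0 : ∀ d, B.toCombMap.edgeJoins (c0 d) (b1 (G.edgeOf d)) (b2 (G.faceOf d))
  cBij : Function.Bijective
    (Sum.elim c0 (Sum.elim c1 c2) : G.D ⊕ (G.D ⊕ G.D) → B.toCombMap.Edge)

def CombMap.IsBary (G : CombMap) (B : LabMap) : Prop := Nonempty (BaryStruct G B)

/-- A local orientation-preserving symmetry-preserving operation. -/
structure Lopsp extends LabMap where
  v0 : toCombMap.Vertex
  v1 : toCombMap.Vertex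
  v2 : toCombMap.Vertex
  plane : toCombMap.IsPlane
  twoConn : toCombMap.TwoConnected
  tri : toCombMap.Triangulated
  noSame : toLabMap.NoSameTypeEdges
  t0 : toLabMap.vtype v0 ≠ 1
  t2 : toLabMap.vtype v2 ≠ 1
  deg_v1 : toLabMap.vtype v1 = 1 → toCombMap.degree v1 = 2
  deg_type1 : ∀ v, v ≠ v0 → v ≠ v1 → v ≠ v2 →
    toLabMap.vtype v = 1 → toCombMap.degree v = 4

namespace Lopsp

/-- The lopsp-operation Dual (three vertices of types 2,1,0; three edges). -/
def IsDual (O : Lopsp) : Prop :=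
  Nat.card O.toLabMap.toCombMap.Vertex = 3 ∧ Nat.card O.toLabMap.toCombMap.Edge = 3 ∧
  O.toLabMap.vtype O.v0 = 2 ∧ O.toLabMap.vtype O.v1 = 1 ∧ O.toLabMap.vtype O.v2 = 0

/-- The identity lopsp-operation (three vertices of types 0,1,2; three edges). -/
def IsIdentity (O : Lopsp) : Prop :=
  Nat.card O.toLabMap.toCombMap.Vertex = 3 ∧ Nat.card O.toLabMap.toCombMap.Edge = 3 ∧
  O.toLabMap.vtype O.v0 = 0 ∧ O.toLabMap.vtype O.v1 = 1 ∧ O.toLabMap.vtype O.v2 = 2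

def EdgeBreaking (O : Lopsp) : Prop :=
  O.toLabMap.toCombMap.Adj O.v1 O.v2 ∧ O.toLabMap.vtype O.v2 = 0

def EdgePreserving (O : Lopsp) : Prop := ¬ O.EdgeBreaking

end Lopsp

/-- Witness data exhibiting the embedded graph `H` as the result `O(G)` of
applying the lopsp-operation `O` to the embedded graph `G`: a barycentric
subdivision `B` of `H` together with the projection `p = π` onto `O`,
a chamber correspondence (chambers of `B` ↔ chambers of `O` × double chambers
of `G`, double chambers being encoded by darts of `G`), and the
identification of the 0-, 1-, 2-points of `B` with the vertices, edges and
faces of `G`. -/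
structure AppData (O : Lopsp) (G H : CombMap) where
  B : LabMap
  bary : BaryStruct H B
  p : B.D → O.toLabMap.D
  p_surj : Function.Surjective p
  p_inv : ∀ d, p (B.toCombMap.inv d) = O.toLabMap.toCombMap.inv (p d)
  p_lab : ∀ d, B.lab d = O.toLabMap.lab (p d)
  chEquiv : B.toCombMap.Face ≃ O.toLabMap.toCombMap.Face × G.D
  copy0 : G.Vertex → B.toCombMap.Vertex
  copy0_inj : Function.Injective copy0
  copy0_spec : ∀ v : G.Vertex, ∀ d : B.D, B.toCombMap.vertexOf d = copy0 v →
    O.toLabMap.toCombMap.vertexOf (p d) = O.v0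
  copy0_surj : ∀ w : B.toCombMap.Vertex,
    (∃ d, B.toCombMap.vertexOf d = w ∧ O.toLabMap.toCombMap.vertexOf (p d) = O.v0) →
    ∃ v, copy0 v = w
  copy1 : G.Edge → B.toCombMap.Vertex
  copy1_inj : Function.Injective copy1
  copy1_spec : ∀ e : G.Edge, ∀ d : B.D, B.toCombMap.vertexOf d = copy1 e →
    O.toLabMap.toCombMap.vertexOf (p d) = O.v1
  copy1_surj : ∀ w : B.toCombMap.Vertex,
    (∃ d, B.toCombMap.vertexOf d = w ∧ O.toLabMap.toCombMap.vertexOf (p d) = O.v1) →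
    ∃ e, copy1 e = w
  copy2 : G.Face → B.toCombMap.Vertex
  copy2_inj : Function.Injective copy2
  copy2_spec : ∀ f : G.Face, ∀ d : B.D, B.toCombMap.vertexOf d = copy2 f →
    O.toLabMap.toCombMap.vertexOf (p d) = O.v2
  copy2_surj : ∀ w : B.toCombMap.Vertex,
    (∃ d, B.toCombMap.vertexOf d = w ∧ O.toLabMap.toCombMap.vertexOf (p d) = O.v2) →
    ∃ f, copy2 f = w
  incid : ∀ d : G.D, ∃ dB : B.D,
    B.toCombMap.vertexOf dB = copy0 (G.vertexOf d) ∧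
    (chEquiv (B.toCombMap.faceOf dB)).2 = d

namespace AppData

variable {O : Lopsp} {G H : CombMap}

/-- The vertex-shadow `S_O(v)` of a vertex `v` of `G`: the vertices of
`O(G)` whose copy in `B_{O(G)}` is of type 0 and adjacent or equal to the
copy of `v`. -/
def shadow (A : AppData O G H) (v : G.Vertex) : Set H.Vertex :=
  {x | A.bary.b0 x = A.copy0 v ∨ A.B.toCombMap.Adj (A.bary.b0 x) (A.copy0 v)}

/-- The face-shadow `S_O(f)` of a face `f` of `G`. -/
def fshadow (A : AppData O G H) (f : G.Face) : Set H.Vertex :=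
  {x | A.bary.b0 x = A.copy2 f ∨ A.B.toCombMap.Adj (A.bary.b0 x) (A.copy2 f)}

end AppData

def Lopsp.Applies (O : Lopsp) (G H : CombMap) : Prop := Nonempty (AppData O G H)

/-- A `c3`-operation: it maps polyhedral embeddings to polyhedral embeddings. -/
def Lopsp.C3 (O : Lopsp) : Prop :=
  ∀ G H : CombMap, G.Polyhedral → O.Applies G H → H.Polyhedral

/-- The list of vertices visited by a list of darts. -/
def CombMap.pathVerts (M : CombMap) : List M.D → List M.Vertex
  | [] => []
  | d :: r => M.vertexOf d :: (d :: r).map (fun x => M.vertexOf (M.inv x))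

/-- A (simple) path given as a nonempty list of consecutive darts visiting
pairwise distinct vertices. -/
def CombMap.IsDartPath (M : CombMap) (p : List M.D) : Prop :=
  p ≠ [] ∧ p.Chain' (fun a b => M.vertexOf (M.inv a) = M.vertexOf b) ∧
    (M.pathVerts p).Nodup


namespace Type2Aux

lemma edge_cases {M : CombMap} {x y : M.D} (h : M.edgeOf x = M.edgeOf y) :
    y = x ∨ y = M.inv x := Quotient.exact h

lemma edge_inv (M : CombMap) (x : M.D) : M.edgeOf x = M.edgeOf (M.inv x) :=
  Quotient.sound (Or.inr rfl)

variable {G : CombMap} {B : LabMap}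

lemma vtype_vertexOf (B : LabMap) (x : B.D) : B.vtype (B.toCombMap.vertexOf x) = B.lab x := rfl

lemma b1_inj (S : BaryStruct G B) {e e' : G.Edge} (h : S.b1 e = S.b1 e') : e = e' := by
  have := S.bBij.1 (a₁ := Sum.inr (Sum.inl e)) (a₂ := Sum.inr (Sum.inl e')) h
  simpa using this

lemma main_aux (S : BaryStruct G B) {x : B.D} (h1 : B.lab x = 1) (h0 : B.lab (B.toCombMap.inv x) = 0) :
    ∃ g : G.D, B.toCombMap.edgeOf x = S.c2 g ∧
      B.toCombMap.vertexOf x = S.b1 (G.edgeOf g) := by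
  obtain ⟨s, hs⟩ := S.cBij.2 (B.toCombMap.edgeOf x)
  rcases s with g | g | g
  · obtain ⟨y, hy, hyv, hyw⟩ := S.j0 g
    simp only [Sum.elim_inl] at hs
    rcases edge_cases (x := y) (y := x) (by rw [hy, hs]) with h' | h'
    · subst h'
      have h2' : B.vtype (B.toCombMap.vertexOf (B.toCombMap.inv x)) = 2 := by
        rw [hyw]; exact S.t2 _
      exact absurd (h2'.symm.trans h0) (by decide)
    · have h2' : B.vtype (B.toCombMap.vertexOf x) = 2 := by
        rw [h', hyw]; exact S.t2 _
      exact absurd (h2'.symm.trans h1) (by decide)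
  · obtain ⟨y, hy, hyv, hyw⟩ := S.j1 g
    simp only [Sum.elim_inr, Sum.elim_inl] at hs
    rcases edge_cases (x := y) (y := x) (by rw [hy, hs]) with h' | h'
    · subst h'
      have h2' : B.vtype (B.toCombMap.vertexOf x) = 0 := by
        rw [hyv]; exact S.t0 _
      exact absurd (h2'.symm.trans h1) (by decide)
    · have h2' : B.vtype (B.toCombMap.vertexOf x) = 2 := by
        rw [h', hyw]; exact S.t2 _
      exact absurd (h2'.symm.trans h1) (by decide)
  · obtain ⟨y, hy, hyv, hyw⟩ := S.j2 g
    simp only [Sum.elim_inr] at hs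
    rcases edge_cases (x := y) (y := x) (by rw [hy, hs]) with h' | h'
    · subst h'
      have h2' : B.vtype (B.toCombMap.vertexOf x) = 0 := by
        rw [hyv]; exact S.t0 _
      exact absurd (h2'.symm.trans h1) (by decide)
    · refine ⟨g, hs.symm, ?_⟩
      rw [h']; exact hyw

lemma at_most_two (S : BaryStruct G B) {x x' x'' : B.D}
    (hx1 : B.lab x = 1) (hx0 : B.lab (B.toCombMap.inv x) = 0)
    (hx1' : B.lab x' = 1) (hx0' : B.lab (B.toCombMap.inv x') = 0)
    (hx1'' : B.lab x'' = 1) (hx0'' : B.lab (B.toCombMap.inv x'') = 0)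
    (hv' : B.toCombMap.vertexOf x' = B.toCombMap.vertexOf x)
    (hv'' : B.toCombMap.vertexOf x'' = B.toCombMap.vertexOf x)
    (hne : B.toCombMap.edgeOf x' ≠ B.toCombMap.edgeOf x'') :
    B.toCombMap.edgeOf x = B.toCombMap.edgeOf x' ∨
      B.toCombMap.edgeOf x = B.toCombMap.edgeOf x'' := by
  obtain ⟨g, hg, hgv⟩ := main_aux S hx1 hx0
  obtain ⟨g', hg', hgv'⟩ := main_aux S hx1' hx0'
  obtain ⟨g'', hg'', hgv''⟩ := main_aux S hx1'' hx0''
  have e1 : G.edgeOf g' = G.edgeOf g := b1_inj S (by rw [← hgv', ← hgv, hv'])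
  have e2 : G.edgeOf g'' = G.edgeOf g := b1_inj S (by rw [← hgv'', ← hgv, hv''])
  rcases edge_cases e1 with h1 | h1
  · left; rw [hg, hg', h1]
  · rcases edge_cases e2 with h2 | h2
    · right; rw [hg, hg'', h2]
    · exfalso
      have : g' = g'' := G.inv.injective (h1.symm.trans h2)
      exact hne (by rw [hg', hg'', this])

lemma labs (S : BaryStruct G B) {p : List B.D} (h2 : ∀ d ∈ p, B.edgeType d = 2) :
    ∀ e ∈ p, (B.lab e = 0 ∧ B.lab (B.toCombMap.inv e) = 1) ∨
      (B.lab e = 1 ∧ B.lab (B.toCombMap.inv e) = 0) := by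
  intro e he
  have h := h2 e he
  have hn := S.noSame e
  simp only [LabMap.edgeType] at h
  revert h hn
  generalize B.lab e = A
  generalize B.lab (B.toCombMap.inv e) = C
  revert A C
  decide

lemma key (S : BaryStruct G B) {p : List B.D} (hp : B.toCombMap.IsDartPath p)
    (h2 : ∀ d ∈ p, B.edgeType d = 2)
    (hhead : ∀ d, p.head? = some d → B.lab d = 0)
    (hlast : ∀ d, p.getLast? = some d → B.lab (B.toCombMap.inv d) = 0)
    {d : B.D} (hd1 : B.lab d = 1) (hd0 : B.lab (B.toCombMap.inv d) = 0)
    (hv : B.toCombMap.vertexOf d ∈ B.toCombMap.pathVerts p) :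
    d ∈ p ∨ B.toCombMap.inv d ∈ p := by
  have hlabs := labs S h2
  obtain ⟨hne0, hch, hnd⟩ := hp
  obtain ⟨a, r, rfl⟩ := List.exists_cons_of_ne_nil hne0
  set L := a :: r with hL
  set f : B.D → B.toCombMap.Vertex := fun x => B.toCombMap.vertexOf (B.toCombMap.inv x)
    with hf
  have hpv : B.toCombMap.pathVerts L = B.toCombMap.vertexOf a :: L.map f := rfl
  rw [hpv] at hv hnd
  have hm : (L.map f).Nodup := (List.nodup_cons.mp hnd).2
  have hhm : B.toCombMap.vertexOf a ∉ L.map f := (List.nodup_cons.mp hnd).1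
  rcases List.mem_cons.mp hv with heq | hv
  · have hda : B.vtype (B.toCombMap.vertexOf d) = B.lab a := by
      rw [heq]; exact vtype_vertexOf B a
    rw [hhead a rfl] at hda
    exact absurd (hda.symm.trans hd1) (by decide)
  rcases List.mem_map.mp hv with ⟨e, he, hveq⟩
  obtain ⟨i, hi⟩ := List.mem_iff_get.mp he
  have hveq' : B.toCombMap.vertexOf (B.toCombMap.inv e) = B.toCombMap.vertexOf d := hveq
  have hlabinv_e : B.lab (B.toCombMap.inv e) = 1 := by
    have h' : B.vtype (B.toCombMap.vertexOf (B.toCombMap.inv e)) = B.lab d := by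
      rw [hveq']; exact vtype_vertexOf B d
    rw [hd1] at h'; exact h'
  have hilt : i.val + 1 < L.length := by
    by_contra hge
    have hival : i.val = L.length - 1 := by
      have := i.isLt; omega
    have hLnn : L ≠ [] := by simp [hL]
    have hglast : L.getLast hLnn = e := by
      rw [List.getLast_eq_getElem, ← hi]
      simp [List.get_eq_getElem, hival]
    have hz := hlast e (by rw [List.getLast?_eq_getLast hLnn, hglast])
    exact absurd (hz.symm.trans hlabinv_e) (by decide)
  set e' : B.D := L.get ⟨i.val + 1, hilt⟩ with he'def
  have hchain : ∀ (j : ℕ) (hj : j + 1 < L.length),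
      B.toCombMap.vertexOf (B.toCombMap.inv (L.get ⟨j, by omega⟩)) =
        B.toCombMap.vertexOf (L.get ⟨j + 1, hj⟩) :=
    fun j hj => by simpa only [List.get_eq_getElem] using List.isChain_iff_getElem.mp hch j hj
  have hee' : B.toCombMap.vertexOf (B.toCombMap.inv e) = B.toCombMap.vertexOf e' := by
    rw [← hi]; exact hchain i.val hilt
  have he'mem : e' ∈ L := List.get_mem _ _
  have he'd : B.toCombMap.vertexOf e' = B.toCombMap.vertexOf d := hee'.symm.trans hveq'
  have hlab_e' : B.lab e' = 1 := by
    have h' : B.vtype (B.toCombMap.vertexOf e') = B.lab d := by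
      rw [he'd]; exact vtype_vertexOf B d
    rw [hd1] at h'; exact h'
  have hlab_e : B.lab e = 0 := by
    rcases hlabs e he with ⟨h, _⟩ | ⟨_, h⟩
    · exact h
    · exact absurd (h.symm.trans hlabinv_e) (by decide)
  have hlabinv_e' : B.lab (B.toCombMap.inv e') = 0 := by
    rcases hlabs e' he'mem with ⟨h, _⟩ | ⟨_, h⟩
    · exact absurd (h.symm.trans hlab_e') (by decide)
    · exact h
  have hEne : B.toCombMap.edgeOf e ≠ B.toCombMap.edgeOf e' := by
    intro hEq
    have hLnd : L.Nodup := hm.of_map f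
    rcases edge_cases hEq with h' | h'
    · have hfin : (⟨i.val + 1, hilt⟩ : Fin L.length) = i := by
        rw [← hLnd.get_inj_iff, hi, ← h']
      have := congrArg Fin.val hfin
      simp at this
    · have hvee' : B.toCombMap.vertexOf (B.toCombMap.inv e') = B.toCombMap.vertexOf e := by
        rw [h', B.toCombMap.inv_invol]
      rcases Nat.eq_zero_or_pos i.val with hi0 | hipos
      · have hea : e = a := by
          rw [← hi]
          have : i = (⟨0, by simp [hL]⟩ : Fin L.length) := Fin.ext hi0
          rw [this]; rfl
        exact hhm (List.mem_map.mpr ⟨e', he'mem, by rw [hf]; dsimp only; rw [hvee', hea]⟩)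
      · have hjlt : i.val - 1 + 1 < L.length := by omega
        have hstep : f (L.get ⟨i.val - 1, by omega⟩) = B.toCombMap.vertexOf e := by
          rw [hf]; dsimp only
          rw [hchain (i.val - 1) hjlt]
          congr 1
          rw [← hi]; congr 1; exact Fin.ext (show i.val - 1 + 1 = i.val by omega)
        have hlm1 : i.val - 1 < (L.map f).length := by simp; omega
        have hlm2 : i.val + 1 < (L.map f).length := by simp; omega
        have h1 : (L.map f).get ⟨i.val - 1, hlm1⟩ = (L.map f).get ⟨i.val + 1, hlm2⟩ := by
          simp only [List.get_eq_getElem, List.getElem_map] at hstep ⊢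
          rw [hstep]
          exact hvee'.symm
        have hfin := hm.get_inj_iff.mp h1
        have hcv : i.val - 1 = i.val + 1 := congrArg Fin.val hfin
        omega
  have hkey := at_most_two S hd1 hd0
    hlabinv_e (by rw [B.toCombMap.inv_invol]; exact hlab_e)
    hlab_e' hlabinv_e'
    hveq' he'd
    (by rw [← edge_inv]; exact hEne)
  rcases hkey with hEq | hEq
  · rcases edge_cases hEq with h' | h'
    · right
      have : B.toCombMap.inv d = e := by
        rw [← h', B.toCombMap.inv_invol]
      rw [this]; exact he
    · left
      have : d = e := B.toCombMap.inv.injective h'.symm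
      rw [this]; exact he
  · rcases edge_cases hEq with h' | h'
    · left; rw [← h']; exact he'mem
    · right; rw [← h']; exact he'mem

end Type2Aux

/-- A type-2 path with endpoints of type 0 in a barycentric
subdivision of an embedded graph is an induced subgraph: every dart of the
barycentric subdivision with both endpoints on the path belongs to the path. -/
theorem type2_path_induced (G : CombMap) (B : LabMap) (S : BaryStruct G B)
    (p : List B.D) (hp : B.toCombMap.IsDartPath p)
    (h2 : ∀ d ∈ p, B.edgeType d = 2)
    (hhead : ∀ d, p.head? = some d → B.lab d = 0)
    (hlast : ∀ d, p.getLast? = some d → B.lab (B.toCombMap.inv d) = 0) :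
    ∀ d : B.D, B.toCombMap.vertexOf d ∈ B.toCombMap.pathVerts p →
      B.toCombMap.vertexOf (B.toCombMap.inv d) ∈ B.toCombMap.pathVerts p →
      d ∈ p ∨ B.toCombMap.inv d ∈ p := by
  intro d hv hw
  have hlabs := Type2Aux.labs S h2
  have hmemtype : ∀ v ∈ B.toCombMap.pathVerts p, B.vtype v = 0 ∨ B.vtype v = 1 := by
    intro v hvmem
    obtain ⟨a, r, rfl⟩ := List.exists_cons_of_ne_nil hp.1
    have hpv : B.toCombMap.pathVerts (a :: r) =
        B.toCombMap.vertexOf a :: (a :: r).map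
          (fun x => B.toCombMap.vertexOf (B.toCombMap.inv x)) := rfl
    rw [hpv] at hvmem
    rcases List.mem_cons.mp hvmem with heq | hvmem
    · left; rw [heq, Type2Aux.vtype_vertexOf B, hhead a rfl]
    · rcases List.mem_map.mp hvmem with ⟨e, he, hveq⟩
      have hveq' : B.toCombMap.vertexOf (B.toCombMap.inv e) = v := hveq
      rcases hlabs e he with ⟨_, h⟩ | ⟨_, h⟩
      · right; rw [← hveq']; exact h
      · left; rw [← hveq']; exact h
  have h1 : B.lab d = 0 ∨ B.lab d = 1 := hmemtype _ hv
  have h2' : B.lab (B.toCombMap.inv d) = 0 ∨ B.lab (B.toCombMap.inv d) = 1 :=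
    hmemtype _ hw
  have hns := S.noSame d
  rcases h1 with h1 | h1
  · have hinv1 : B.lab (B.toCombMap.inv d) = 1 := by
      rcases h2' with h | h
      · exact absurd (h.trans h1.symm) hns
      · exact h
    have := Type2Aux.key S hp h2 hhead hlast hinv1
      (by rw [B.toCombMap.inv_invol]; exact h1) hw
    rcases this with h | h
    · right; exact h
    · left; rw [← B.toCombMap.inv_invol d]; exact h
  · have hinv0 : B.lab (B.toCombMap.inv d) = 0 := by
      rcases h2' with h | h
      · exact h
      · exact absurd (h.trans h1.symm) hns
    exact Type2Aux.key S hp h2 hhead hlast h1 hinv0 hv
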